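/- Let S ⊆ Y = P^{n_1} × ... × P^{n_k} be a finite set with e(S) > 0 and let S' be the kernel of S. Then S' is exactly the set of essential points of S, i.e., S' = { o ∈ S : e(S \ {o}) = e(S) − 1 }. -/

import Mathlib

open scoped LinearAlgebra.Projectivization
open Projectivization

/-- The multiprojective space `Y = P^{n 0} × ... × P^{n (k-1)}` over `K`,
where `P^m = P(K^{m+1})`. -/
abbrev MultiProj (K : Type*) [Field K] {k : ℕ} (n : Fin k → ℕ) :=
  ∀ i : Fin k, ℙ K (Fin (n i + 1) → K)

/-- A vector representative of the Segre image `ν(x)` of a point `x ∈ Y`: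
the tensor product of representatives of the coordinates. -/
noncomputable def segreVec {K : Type*} [Field K] {k : ℕ} {n : Fin k → ℕ}
    (x : MultiProj K n) : PiTensorProduct K (fun i : Fin k => Fin (n i + 1) → K) :=
  PiTensorProduct.tprod K (fun i => (x i).rep)

/-- `e(S) = #S − 1 − dim⟨ν(S)⟩`, computed as `#S` minus the rank of the linear span
of vector representatives of `ν(S)`. -/
noncomputable def eSet {K : Type*} [Field K] {k : ℕ} {n : Fin k → ℕ}
    (S : Set (MultiProj K n)) : ℕ :=
  S.ncard - Module.finrank K ↥(Submodule.span K (segreVec '' S))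

/-- `S ⊆ Y` is nondegenerate: `π i '' S` spans `P^{n i}` for every `i`. -/
def Nondeg {K : Type*} [Field K] {k : ℕ} {n : Fin k → ℕ}
    (S : Set (MultiProj K n)) : Prop :=
  ∀ i : Fin k, Submodule.span K ((fun x => (x i).rep) '' S) = ⊤

/-- For products of `P^1`'s: `S` is nondegenerate iff each projection has ≥ 2 points. -/
def NondegPts {K : Type*} [Field K] {k : ℕ} {n : Fin k → ℕ}
    (S : Set (MultiProj K n)) : Prop :=
  ∀ i : Fin k, ∃ p ∈ S, ∃ q ∈ S, p i ≠ q i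

/-- `S` is a circuit: linearly dependent, but every proper subset is linearly independent. -/
def IsCircuit {K : Type*} [Field K] {k : ℕ} {n : Fin k → ℕ}
    (S : Set (MultiProj K n)) : Prop :=
  0 < eSet S ∧ ∀ S' : Set (MultiProj K n), S' ⊂ S → eSet S' = 0

/-- `q ∈ P^r` equals `ν(s)` for the point `s ∈ Y`. -/
def IsSegreOf {K : Type*} [Field K] {k : ℕ} {n : Fin k → ℕ}
    (q : ℙ K (PiTensorProduct K (fun i : Fin k => Fin (n i + 1) → K)))
    (s : MultiProj K n) : Prop :=
  ∃ c : K, q.rep = c • segreVec s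

/-- `q ∈ P^r` lies on the Segre variety `ν(Y)`. -/
def InSegre {K : Type*} [Field K] {k : ℕ} {n : Fin k → ℕ}
    (q : ℙ K (PiTensorProduct K (fun i : Fin k => Fin (n i + 1) → K))) : Prop :=
  ∃ y : MultiProj K n, IsSegreOf q y

/-- `S` is minimal: there is no projective line `L ⊆ P^r` contained in the Segre variety
`ν(Y)` meeting `ν(S)` in at least two points. -/
def IsMinimal {K : Type*} [Field K] {k : ℕ} {n : Fin k → ℕ}
    (S : Set (MultiProj K n)) : Prop :=
  ¬ ∃ W : Submodule K (PiTensorProduct K (fun i : Fin k => Fin (n i + 1) → K)),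
      Module.finrank K ↥W = 2 ∧
      (∀ x : ℙ K (PiTensorProduct K (fun i : Fin k => Fin (n i + 1) → K)),
        x.rep ∈ W → InSegre x) ∧
      ∃ x₁ x₂ : ℙ K (PiTensorProduct K (fun i : Fin k => Fin (n i + 1) → K)),
        x₁ ≠ x₂ ∧ x₁.rep ∈ W ∧ x₂.rep ∈ W ∧
        (∃ s₁ ∈ S, IsSegreOf x₁ s₁) ∧ (∃ s₂ ∈ S, IsSegreOf x₂ s₂)

/-- The `X`-rank of a point `q ∈ P^r`: the minimal cardinality of a finite `A ⊆ Y`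
with `q ∈ ⟨ν(A)⟩`. -/
noncomputable def xRank {K : Type*} [Field K] {k : ℕ} {n : Fin k → ℕ}
    (q : ℙ K (PiTensorProduct K (fun i : Fin k => Fin (n i + 1) → K))) : ℕ :=
  sInf {m : ℕ | ∃ A : Set (MultiProj K n), A.Finite ∧ A.ncard = m ∧
    q.rep ∈ Submodule.span K (segreVec '' A)}


section AuxKernel

variable {K V α : Type*} [Field K] [AddCommGroup V] [Module K V]

private lemma aux_rank_le_ncard (f : α → V) (A : Set α) (hA : A.Finite) :
    Module.finrank K (Submodule.span K (f '' A)) ≤ A.ncard := by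
  haveI := (hA.image f).fintype
  calc Module.finrank K (Submodule.span K (f '' A)) ≤ (f '' A).toFinset.card :=
        finrank_span_le_card _
    _ = (f '' A).ncard := (Set.ncard_eq_toFinset_card' _).symm
    _ ≤ A.ncard := Set.ncard_image_le hA

private lemma aux_rank_mono (f : α → V) {A B : Set α} (hAB : A ⊆ B) (hB : B.Finite) :
    Module.finrank K (Submodule.span K (f '' A)) ≤
      Module.finrank K (Submodule.span K (f '' B)) := by
  haveI : Module.Finite K (Submodule.span K (f '' B)) :=
    FiniteDimensional.span_of_finite K (hB.image f)
  exact Submodule.finrank_mono (Submodule.span_mono (Set.image_mono hAB))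

private lemma aux_rank_subset_add (f : α → V) {A B : Set α} (hAB : A ⊆ B) (hB : B.Finite) :
    Module.finrank K (Submodule.span K (f '' B)) ≤
      Module.finrank K (Submodule.span K (f '' A)) + (B \ A).ncard := by
  haveI : FiniteDimensional K (Submodule.span K (f '' A)) :=
    FiniteDimensional.span_of_finite K ((hB.subset hAB).image f)
  haveI : FiniteDimensional K (Submodule.span K (f '' (B \ A))) :=
    FiniteDimensional.span_of_finite K ((hB.subset Set.diff_subset).image f)
  have h1 : B = A ∪ (B \ A) := (Set.union_diff_cancel hAB).symm
  have h2 : Submodule.span K (f '' B) =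
      Submodule.span K (f '' A) ⊔ Submodule.span K (f '' (B \ A)) := by
    conv_lhs => rw [h1]
    rw [Set.image_union, Submodule.span_union]
  rw [h2]
  exact le_trans (Submodule.finrank_add_le_finrank_add_finrank _ _)
    (add_le_add_right (aux_rank_le_ncard f _ (hB.subset Set.diff_subset)) _)

private lemma aux_e_mono (f : α → V) {A B : Set α} (hAB : A ⊆ B) (hB : B.Finite) :
    A.ncard - Module.finrank K (Submodule.span K (f '' A)) ≤
      B.ncard - Module.finrank K (Submodule.span K (f '' B)) := by
  have h1 := aux_rank_subset_add (K := K) f hAB hB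
  have h2 := aux_rank_le_ncard (K := K) f A (hB.subset hAB)
  have h3 : (B \ A).ncard + A.ncard = B.ncard :=
    Set.ncard_diff_add_ncard_of_subset hAB hB
  omega

end AuxKernel

theorem kernel_eq_essential_points
    {K : Type*} [Field K] {k : ℕ} {n : Fin k → ℕ}
    (hk : 0 < k) (hn : ∀ i, 0 < n i)
    (S : Set (MultiProj K n)) (hSfin : S.Finite) (hdep : 0 < eSet S)
    (S' : Set (MultiProj K n)) (hsub : S' ⊆ S) (heq : eSet S' = eSet S)
    (hker : ∀ S'' : Set (MultiProj K n), S'' ⊂ S' → eSet S'' < eSet S) :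
    S' = {o ∈ S | eSet (S \ {o}) = eSet S - 1} := by
  have hS'fin : S'.Finite := hSfin.subset hsub
  have hrS_le : Module.finrank K (Submodule.span K (segreVec '' S)) ≤ S.ncard :=
    aux_rank_le_ncard segreVec S hSfin
  ext o
  simp only [Set.mem_setOf_eq]
  constructor
  · intro ho
    have hoS : o ∈ S := hsub ho
    refine ⟨hoS, ?_⟩
    set A : Set (MultiProj K n) := S' \ {o} with hA
    have hA_ss : A ⊂ S' := Set.sdiff_singleton_ssubset.mpr ho
    have e1 : eSet A < eSet S := hker A hA_ss
    have hAfin : A.Finite := hS'fin.subset Set.diff_subset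
    have card1 : A.ncard = S'.ncard - 1 := Set.ncard_diff_singleton_of_mem ho
    have cpos : 0 < S'.ncard := Set.ncard_pos hS'fin |>.mpr ⟨o, ho⟩
    have hdiff : S' \ A = {o} := Set.diff_diff_cancel_left (Set.singleton_subset_iff.mpr ho)
    have r1 : Module.finrank K (Submodule.span K (segreVec '' S')) ≤
        Module.finrank K (Submodule.span K (segreVec '' A)) + 1 := by
      have := aux_rank_subset_add (K := K) segreVec (Set.diff_subset : A ⊆ S') hS'fin
      rwa [hdiff, Set.ncard_singleton] at this
    have r2 : Module.finrank K (Submodule.span K (segreVec '' A)) ≤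
        Module.finrank K (Submodule.span K (segreVec '' S')) :=
      aux_rank_mono segreVec Set.diff_subset hS'fin
    have r3 : Module.finrank K (Submodule.span K (segreVec '' S')) ≤ S'.ncard :=
      aux_rank_le_ncard segreVec S' hS'fin
    have hpos' : 0 < eSet S' := heq ▸ hdep
    have hr : Module.finrank K (Submodule.span K (segreVec '' A)) =
        Module.finrank K (Submodule.span K (segreVec '' S')) := by
      have e2 : eSet A = A.ncard - Module.finrank K (Submodule.span K (segreVec '' A)) := rfl
      have e3 : eSet S' = S'.ncard - Module.finrank K (Submodule.span K (segreVec '' S')) := rfl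
      rw [e2, card1] at e1
      rw [e3] at hpos'
      rw [← heq, e3] at e1
      omega
    haveI : FiniteDimensional K (Submodule.span K (segreVec '' S')) :=
      FiniteDimensional.span_of_finite K (hS'fin.image segreVec)
    have hspan : Submodule.span K (segreVec '' A) = Submodule.span K (segreVec '' S') :=
      Submodule.eq_of_le_of_finrank_eq (Submodule.span_mono (Set.image_mono Set.diff_subset)) hr
    have hmem : segreVec o ∈ Submodule.span K (segreVec '' (S \ {o})) := by
      have h1 : segreVec o ∈ Submodule.span K (segreVec '' S') :=
        Submodule.subset_span ⟨o, ho, rfl⟩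
      rw [← hspan] at h1
      exact Submodule.span_mono (Set.image_mono (by
        intro x hx
        exact ⟨hsub hx.1, hx.2⟩)) h1
    have hspan2 : Submodule.span K (segreVec '' (S \ {o})) = Submodule.span K (segreVec '' S) := by
      refine le_antisymm (Submodule.span_mono (Set.image_mono Set.diff_subset)) ?_
      rw [Submodule.span_le]
      rintro _ ⟨y, hy, rfl⟩
      by_cases hyo : y = o
      · subst hyo; exact hmem
      · exact Submodule.subset_span ⟨y, ⟨hy, hyo⟩, rfl⟩
    have cardS : (S \ {o}).ncard = S.ncard - 1 := Set.ncard_diff_singleton_of_mem hoS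
    have cSpos : 0 < S.ncard := Set.ncard_pos hSfin |>.mpr ⟨o, hoS⟩
    have e4 : eSet (S \ {o}) = (S \ {o}).ncard -
        Module.finrank K (Submodule.span K (segreVec '' (S \ {o}))) := rfl
    have e5 : eSet S = S.ncard - Module.finrank K (Submodule.span K (segreVec '' S)) := rfl
    rw [e4, cardS, hspan2]
    rw [e5] at hdep ⊢
    omega
  · rintro ⟨hoS, hess⟩
    by_contra ho'
    have hsub' : S' ⊆ S \ {o} := Set.subset_diff_singleton hsub ho'
    have hmono : eSet S' ≤ eSet (S \ {o}) :=
      aux_e_mono segreVec hsub' (hSfin.subset Set.diff_subset)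
    omega
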